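/- (Estimation error of the merit.) Let P and P* be two transition models with all entries P(s,a,1), P*(s,a,1) ∈ [0,1], let d(s,a) ≥ 0 for s,a ∈ {0,1}, and let ω₁, η₁, ω₂, η₂ ∈ ℝ satisfy: (i) −1 ≤ ω₁ ≤ η₁ < 1 and −1 ≤ ω₂ ≤ η₂ < 1; (ii) ω₁ ≤ P(1,1,1) − P(0,1,1) ≤ η₁ and ω₁ ≤ P*(1,1,1) − P*(0,1,1) ≤ η₁; (iii) ω₂ ≤ P(1,0,1) − P(0,0,1) ≤ η₂ and ω₂ ≤ P*(1,0,1) − P*(0,0,1) ≤ η₂; (iv) |P(s,a,1) − P*(s,a,1)| ≤ d(s,a)/2 for all s,a; (v) η₁ − ω₁ ≤ d(1,1) + d(0,1) and η₂ − ω₂ ≤ d(1,0) + d(0,0). Then |μ(P) − μ(P*)| ≤ (d(1,1) + 2d(0,1)) / ((1−η₁)(1−ω₁)) + (d(1,0) + 2d(0,0)) / ((1−η₂)(1−ω₂)). Consequently, if η = max{η₁, η₂} and ω = max{ω₁, ω₂} with η, ω < 1, then |μ(P) − μ(P*)| ≤ (d(1,1) + 2d(0,1) + d(1,0) + 2d(0,0))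 / ((1−η)(1−ω)). -/

import Mathlib

/-- The merit of an arm with transition model `P` (`P s a` denotes `P(s,a,1)`):
the difference of steady-state probabilities of being in state 1 under always
pulling versus never pulling. -/
noncomputable def merit (P : Fin 2 → Fin 2 → ℝ) : ℝ :=
  P 0 1 / (1 - P 1 1 + P 0 1) - P 0 0 / (1 - P 1 0 + P 0 0)

lemma merit_aux (x y xs ys ω η dx dy : ℝ)
    (hxs0 : 0 ≤ xs) (hxs1 : xs ≤ 1)
    (hω : -1 ≤ ω) (hωη : ω ≤ η) (hη : η < 1)
    (hδl : ω ≤ y - x) (hδu : y - x ≤ η)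
    (hδsl : ω ≤ ys - xs) (hδsu : ys - xs ≤ η)
    (hdx0 : 0 ≤ dx) (hdy0 : 0 ≤ dy)
    (hdx : |x - xs| ≤ dx / 2)
    (hgap : η - ω ≤ dy + dx) :
    |x / (1 - y + x) - xs / (1 - ys + xs)| ≤ (dy + 2 * dx) / ((1 - η) * (1 - ω)) := by
  have hηp : (0:ℝ) < 1 - η := by linarith
  have hωp : (0:ℝ) < 1 - ω := by linarith
  have hA : (0:ℝ) < 1 - y + x := by linarith
  have hAs : (0:ℝ) < 1 - ys + xs := by linarith
  have hid : x / (1 - y + x) - xs / (1 - ys + xs)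
      = (x - xs) / (1 - y + x) + xs * (1 / (1 - y + x) - 1 / (1 - ys + xs)) := by
    field_simp
    ring
  rw [hid]
  have T1 : |(x - xs) / (1 - y + x)| ≤ dx / ((1 - η) * (1 - ω)) := by
    rw [abs_div, abs_of_pos hA]
    have h1 : |x - xs| / (1 - y + x) ≤ (dx / 2) / (1 - η) := by
      apply div_le_div₀ (by linarith) hdx hηp (by linarith)
    refine h1.trans ?_
    rw [div_le_div_iff₀ hηp (by positivity)]
    have h2 : dx * (1 - η) * (1 - ω) ≤ dx * (1 - η) * 2 :=
      mul_le_mul_of_nonneg_left (by linarith) (mul_nonneg hdx0 hηp.le)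
    nlinarith [h2]
  have T2 : |xs * (1 / (1 - y + x) - 1 / (1 - ys + xs))| ≤ (dy + dx) / ((1 - η) * (1 - ω)) := by
    rw [abs_mul, abs_of_nonneg hxs0]
    have hr : |1 / (1 - y + x) - 1 / (1 - ys + xs)| ≤ 1 / (1 - η) - 1 / (1 - ω) := by
      have b1 : 1 / (1 - y + x) ≤ 1 / (1 - η) := by
        apply one_div_le_one_div_of_le hηp; linarith
      have b2 : 1 / (1 - ω) ≤ 1 / (1 - y + x) := by
        apply one_div_le_one_div_of_le hA; linarith
      have b3 : 1 / (1 - ys + xs) ≤ 1 / (1 - η) := by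
        apply one_div_le_one_div_of_le hηp; linarith
      have b4 : 1 / (1 - ω) ≤ 1 / (1 - ys + xs) := by
        apply one_div_le_one_div_of_le hAs; linarith
      rw [abs_sub_le_iff]
      constructor <;> linarith
    have heq : 1 / (1 - η) - 1 / (1 - ω) = (η - ω) / ((1 - η) * (1 - ω)) := by
      field_simp
      ring
    have hstep : xs * |1 / (1 - y + x) - 1 / (1 - ys + xs)|
        ≤ 1 * ((η - ω) / ((1 - η) * (1 - ω))) := by
      apply mul_le_mul hxs1 (by rw [← heq]; exact hr) (abs_nonneg _) one_pos.le
    rw [one_mul] at hstep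
    refine hstep.trans ?_
    apply div_le_div_of_nonneg_right hgap (by positivity) |>.trans_eq rfl
  calc |(x - xs) / (1 - y + x) + xs * (1 / (1 - y + x) - 1 / (1 - ys + xs))|
      ≤ |(x - xs) / (1 - y + x)| + |xs * (1 / (1 - y + x) - 1 / (1 - ys + xs))| :=
        abs_add_le _ _
    _ ≤ dx / ((1 - η) * (1 - ω)) + (dy + dx) / ((1 - η) * (1 - ω)) := add_le_add T1 T2
    _ = (dy + 2 * dx) / ((1 - η) * (1 - ω)) := by rw [← add_div]; ring_nf

/-- estimation error of the merit. -/
theorem merit_estimation_error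
    (P Ps : Fin 2 → Fin 2 → ℝ) (d : Fin 2 → Fin 2 → ℝ)
    (hP : ∀ s a : Fin 2, 0 ≤ P s a ∧ P s a ≤ 1)
    (hPs : ∀ s a : Fin 2, 0 ≤ Ps s a ∧ Ps s a ≤ 1)
    (hd : ∀ s a : Fin 2, 0 ≤ d s a)
    (ω₁ η₁ ω₂ η₂ : ℝ)
    (h1 : -1 ≤ ω₁ ∧ ω₁ ≤ η₁ ∧ η₁ < 1)
    (h2 : -1 ≤ ω₂ ∧ ω₂ ≤ η₂ ∧ η₂ < 1)
    (hc1 : ω₁ ≤ P 1 1 - P 0 1 ∧ P 1 1 - P 0 1 ≤ η₁)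
    (hc1s : ω₁ ≤ Ps 1 1 - Ps 0 1 ∧ Ps 1 1 - Ps 0 1 ≤ η₁)
    (hc2 : ω₂ ≤ P 1 0 - P 0 0 ∧ P 1 0 - P 0 0 ≤ η₂)
    (hc2s : ω₂ ≤ Ps 1 0 - Ps 0 0 ∧ Ps 1 0 - Ps 0 0 ≤ η₂)
    (hdist : ∀ s a : Fin 2, |P s a - Ps s a| ≤ d s a / 2)
    (hgap1 : η₁ - ω₁ ≤ d 1 1 + d 0 1)
    (hgap2 : η₂ - ω₂ ≤ d 1 0 + d 0 0) :
    |merit P - merit Ps| ≤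
      (d 1 1 + 2 * d 0 1) / ((1 - η₁) * (1 - ω₁)) +
      (d 1 0 + 2 * d 0 0) / ((1 - η₂) * (1 - ω₂)) ∧
    |merit P - merit Ps| ≤
      (d 1 1 + 2 * d 0 1 + d 1 0 + 2 * d 0 0) /
        ((1 - max η₁ η₂) * (1 - max ω₁ ω₂)) := by
  obtain ⟨hω1, hωη1, hη1⟩ := h1
  obtain ⟨hω2, hωη2, hη2⟩ := h2
  have A1 := merit_aux (P 0 1) (P 1 1) (Ps 0 1) (Ps 1 1) ω₁ η₁ (d 0 1) (d 1 1)
    (hPs 0 1).1 (hPs 0 1).2 hω1 hωη1 hη1 hc1.1 hc1.2 hc1s.1 hc1s.2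
    (hd 0 1) (hd 1 1) (hdist 0 1) hgap1
  have A2 := merit_aux (P 0 0) (P 1 0) (Ps 0 0) (Ps 1 0) ω₂ η₂ (d 0 0) (d 1 0)
    (hPs 0 0).1 (hPs 0 0).2 hω2 hωη2 hη2 hc2.1 hc2.2 hc2s.1 hc2s.2
    (hd 0 0) (hd 1 0) (hdist 0 0) hgap2
  have hmain : |merit P - merit Ps| ≤
      (d 1 1 + 2 * d 0 1) / ((1 - η₁) * (1 - ω₁)) +
      (d 1 0 + 2 * d 0 0) / ((1 - η₂) * (1 - ω₂)) := by
    have hdecomp : merit P - merit Ps =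
        (P 0 1 / (1 - P 1 1 + P 0 1) - Ps 0 1 / (1 - Ps 1 1 + Ps 0 1)) -
        (P 0 0 / (1 - P 1 0 + P 0 0) - Ps 0 0 / (1 - Ps 1 0 + Ps 0 0)) := by
      simp [merit]; ring
    rw [hdecomp]
    exact (abs_sub _ _).trans (add_le_add A1 A2)
  refine ⟨hmain, hmain.trans ?_⟩
  set η := max η₁ η₂
  set ω := max ω₁ ω₂
  have hηlt : η < 1 := max_lt hη1 hη2
  have hωη : ω ≤ η := max_le_max hωη1 hωη2
  have hηp : (0:ℝ) < 1 - η := by linarith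
  have hωp : (0:ℝ) < 1 - ω := by linarith
  have key : ∀ a b : ℝ, a ≤ η → b ≤ ω → a < 1 → b < 1 →
      (1 - η) * (1 - ω) ≤ (1 - a) * (1 - b) := by
    intro a b ha hb ha1 hb1
    apply mul_le_mul (by linarith) (by linarith) (by linarith) (by linarith)
  have hd1 : (d 1 1 + 2 * d 0 1) / ((1 - η₁) * (1 - ω₁))
      ≤ (d 1 1 + 2 * d 0 1) / ((1 - η) * (1 - ω)) := by
    apply div_le_div_of_nonneg_left (by have := hd 1 1; have := hd 0 1; linarith)
      (by positivity)
      (key η₁ ω₁ (le_max_left _ _) (le_max_left _ _) hη1 (by linarith))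
  have hd2 : (d 1 0 + 2 * d 0 0) / ((1 - η₂) * (1 - ω₂))
      ≤ (d 1 0 + 2 * d 0 0) / ((1 - η) * (1 - ω)) := by
    apply div_le_div_of_nonneg_left (by have := hd 1 0; have := hd 0 0; linarith)
      (by positivity)
      (key η₂ ω₂ (le_max_right _ _) (le_max_right _ _) hη2 (by linarith))
  calc (d 1 1 + 2 * d 0 1) / ((1 - η₁) * (1 - ω₁)) +
      (d 1 0 + 2 * d 0 0) / ((1 - η₂) * (1 - ω₂))
      ≤ (d 1 1 + 2 * d 0 1) / ((1 - η) * (1 - ω)) +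
        (d 1 0 + 2 * d 0 0) / ((1 - η) * (1 - ω)) := add_le_add hd1 hd2
    _ = (d 1 1 + 2 * d 0 1 + d 1 0 + 2 * d 0 0) / ((1 - η) * (1 - ω)) := by
        rw [← add_div]; ring_nf
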